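/- (Theorem 2.3.) Let N and s be positive natural numbers, and work in ℝ^N with the standard inner product ⟨·,·⟩ and componentwise product ⊙. Let S : ℝ^N → ℝ^N be a linear map with ⟨S v, v⟩ = 0 for all v. Let τ ∈ ℝ, and let a : Fin s → Fin s → ℝ and b : Fin s → ℝ satisfy bᵢ aᵢⱼ + bⱼ aⱼᵢ = bᵢ bⱼ for all i, j. For each i = 1,…,s let aᵢ* ∈ ℝ^N be given (the predicted values). Suppose uⁿ, qⁿ, uⁿ⁺¹, qⁿ⁺¹ ∈ ℝ^N and stage values uᵢ, qᵢ, kᵢ, lᵢ ∈ ℝ^N satisfy kᵢ = S( uᵢ + (1/6) qᵢ + (1/3) aᵢ* ⊙ uᵢ ), lᵢ = 2 aᵢ* ⊙ kᵢ, uᵢ = uⁿ + τ Σⱼ aᵢⱼ kⱼ, qᵢ = qⁿ + τ Σⱼ aᵢⱼ lⱼ, uⁿ⁺¹ = uⁿ + τ Σᵢ bᵢ kᵢ, and qⁿ⁺¹ = qⁿ + τ Σᵢ bᵢ lᵢ. Then ½ ⟨uⁿ⁺¹, uⁿ⁺¹⟩ + (1/6) ⟨uⁿ⁺¹, qⁿ⁺¹⟩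 = ½ ⟨uⁿ, uⁿ⟩ + (1/6) ⟨uⁿ, qⁿ⟩. -/

import Mathlib

open scoped RealInnerProductSpace BigOperators

/-- Componentwise (pointwise) product on `EuclideanSpace ℝ (Fin N)`. -/
def cwMul {N : ℕ} (v w : EuclideanSpace ℝ (Fin N)) : EuclideanSpace ℝ (Fin N) :=
  WithLp.toLp 2 (fun i => v i * w i)

lemma cw_swap {N : ℕ} (a x y : EuclideanSpace ℝ (Fin N)) :
    ⟪x, cwMul a y⟫ = ⟪y, cwMul a x⟫ := by
  simp only [PiLp.inner_apply, RCLike.inner_apply, conj_trivial, cwMul, PiLp.toLp_apply]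
  exact Finset.sum_congr rfl fun i _ => by ring

/-- Theorem 2.3: the linear energy-preserving Runge–Kutta scheme for
the linearized EQ system conserves the discrete quadratic energy
Eⁿ = ½⟨uⁿ,uⁿ⟩ + (1/6)⟨uⁿ,qⁿ⟩. -/
theorem scheme23_energy_conservation
    (N s : ℕ) (hN : 0 < N) (hs : 0 < s)
    (S : EuclideanSpace ℝ (Fin N) →ₗ[ℝ] EuclideanSpace ℝ (Fin N))
    (hS : ∀ v : EuclideanSpace ℝ (Fin N), ⟪S v, v⟫ = 0)
    (τ : ℝ) (a : Fin s → Fin s → ℝ) (b : Fin s → ℝ)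
    (hsym : ∀ i j, b i * a i j + b j * a j i = b i * b j)
    (astar : Fin s → EuclideanSpace ℝ (Fin N))
    (un qn un1 qn1 : EuclideanSpace ℝ (Fin N))
    (uS qS kS lS : Fin s → EuclideanSpace ℝ (Fin N))
    (hk : ∀ i, kS i = S (uS i + (1/6 : ℝ) • qS i + (1/3 : ℝ) • cwMul (astar i) (uS i)))
    (hl : ∀ i, lS i = (2 : ℝ) • cwMul (astar i) (kS i))
    (hu : ∀ i, uS i = un + τ • ∑ j, a i j • kS j)
    (hq : ∀ i, qS i = qn + τ • ∑ j, a i j • lS j)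
    (hun1 : un1 = un + τ • ∑ i, b i • kS i)
    (hqn1 : qn1 = qn + τ • ∑ i, b i • lS i) :
    (1/2 : ℝ) * ⟪un1, un1⟫ + (1/6 : ℝ) * ⟪un1, qn1⟫
      = (1/2 : ℝ) * ⟪un, un⟫ + (1/6 : ℝ) * ⟪un, qn⟫ := by
  have hinr : ∀ (x : EuclideanSpace ℝ (Fin N)) (c : Fin s → ℝ)
      (y : Fin s → EuclideanSpace ℝ (Fin N)),
      ⟪x, τ • ∑ j, c j • y j⟫ = τ * ∑ j, c j * ⟪x, y j⟫ := by
    intro x c y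
    rw [real_inner_smul_right, inner_sum]
    simp only [real_inner_smul_right]
  have hinl : ∀ (x : EuclideanSpace ℝ (Fin N)) (c : Fin s → ℝ)
      (y : Fin s → EuclideanSpace ℝ (Fin N)),
      ⟪τ • ∑ j, c j • y j, x⟫ = τ * ∑ j, c j * ⟪y j, x⟫ := by
    intro x c y
    rw [real_inner_smul_left, sum_inner]
    simp only [real_inner_smul_left]
  -- per-stage identity from skew-adjointness
  have stage : ∀ i, ⟪kS i, uS i⟫ + (1/6 : ℝ) * ⟪kS i, qS i⟫
      + (1/6 : ℝ) * ⟪uS i, lS i⟫ = 0 := by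
    intro i
    have h0 := hS (uS i + (1/6 : ℝ) • qS i + (1/3 : ℝ) • cwMul (astar i) (uS i))
    rw [← hk i] at h0
    have h1 : ⟪uS i, lS i⟫ = 2 * ⟪kS i, cwMul (astar i) (uS i)⟫ := by
      rw [hl i, real_inner_smul_right, cw_swap, real_inner_comm]
    rw [inner_add_right, inner_add_right, real_inner_smul_right,
      real_inner_smul_right] at h0
    rw [h1]; linarith
  -- scalar abbreviations
  set SA := ∑ i, b i * ⟪kS i, un⟫ with hSA
  set SB := ∑ i, b i * ⟪un, lS i⟫ with hSB
  set SC := ∑ i, b i * ⟪kS i, qn⟫ with hSC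
  set SKba := ∑ i, b i * ∑ j, a i j * ⟪kS i, kS j⟫ with hSKba
  set SL1 := ∑ i, b i * ∑ j, a i j * ⟪kS j, lS i⟫ with hSL1
  set SLba := ∑ i, b i * ∑ j, a i j * ⟪kS i, lS j⟫ with hSLba
  set SKbb := ∑ i, b i * ∑ j, b j * ⟪kS i, kS j⟫ with hSKbb
  set SLbb := ∑ i, b i * ∑ j, b j * ⟪kS i, lS j⟫ with hSLbb
  -- summed stage identity
  have h3 : SA + τ * SKba + (1/6 : ℝ) * (SC + τ * SLba)
      + (1/6 : ℝ) * (SB + τ * SL1) = 0 := by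
    have hstage : ∀ i, b i * ((⟪kS i, un⟫ + τ * ∑ j, a i j * ⟪kS i, kS j⟫)
        + (1/6 : ℝ) * (⟪kS i, qn⟫ + τ * ∑ j, a i j * ⟪kS i, lS j⟫)
        + (1/6 : ℝ) * (⟪un, lS i⟫ + τ * ∑ j, a i j * ⟪kS j, lS i⟫)) = 0 := by
      intro i
      have e1 : ⟪kS i, uS i⟫ = ⟪kS i, un⟫ + τ * ∑ j, a i j * ⟪kS i, kS j⟫ := by
        rw [hu i, inner_add_right, hinr]
      have e2 : ⟪kS i, qS i⟫ = ⟪kS i, qn⟫ + τ * ∑ j, a i j * ⟪kS i, lS j⟫ := by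
        rw [hq i, inner_add_right, hinr]
      have e3 : ⟪uS i, lS i⟫ = ⟪un, lS i⟫ + τ * ∑ j, a i j * ⟪kS j, lS i⟫ := by
        rw [hu i, inner_add_left, hinl]
      rw [← e1, ← e2, ← e3, stage i, mul_zero]
    have hsum0 : ∑ i, b i * ((⟪kS i, un⟫ + τ * ∑ j, a i j * ⟪kS i, kS j⟫)
        + (1/6 : ℝ) * (⟪kS i, qn⟫ + τ * ∑ j, a i j * ⟪kS i, lS j⟫)
        + (1/6 : ℝ) * (⟪un, lS i⟫ + τ * ∑ j, a i j * ⟪kS j, lS i⟫)) = 0 :=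
      Finset.sum_eq_zero fun i _ => hstage i
    have split : ∑ i, b i * ((⟪kS i, un⟫ + τ * ∑ j, a i j * ⟪kS i, kS j⟫)
        + (1/6 : ℝ) * (⟪kS i, qn⟫ + τ * ∑ j, a i j * ⟪kS i, lS j⟫)
        + (1/6 : ℝ) * (⟪un, lS i⟫ + τ * ∑ j, a i j * ⟪kS j, lS i⟫))
        = ∑ i, (b i * ⟪kS i, un⟫ + τ * (b i * ∑ j, a i j * ⟪kS i, kS j⟫)
          + (1/6 : ℝ) * (b i * ⟪kS i, qn⟫) + (τ/6) * (b i * ∑ j, a i j * ⟪kS i, lS j⟫)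
          + (1/6 : ℝ) * (b i * ⟪un, lS i⟫) + (τ/6) * (b i * ∑ j, a i j * ⟪kS j, lS i⟫)) :=
      Finset.sum_congr rfl fun i _ => by ring
    rw [split] at hsum0
    simp only [Finset.sum_add_distrib, ← Finset.mul_sum] at hsum0
    rw [← hSA, ← hSB, ← hSC, ← hSKba, ← hSL1, ← hSLba] at hsum0
    linarith
  -- symmetry identities
  have h4 : 2 * SKba = SKbb := by
    have swap : SKba = ∑ i, ∑ j, b j * a j i * ⟪kS i, kS j⟫ := by
      rw [hSKba]
      simp only [Finset.mul_sum, ← mul_assoc]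
      rw [Finset.sum_comm]
      exact Finset.sum_congr rfl fun i _ => Finset.sum_congr rfl fun j _ => by
        rw [real_inner_comm]
    calc 2 * SKba = SKba + SKba := by ring
      _ = ∑ i, ∑ j, (b i * a i j + b j * a j i) * ⟪kS i, kS j⟫ := by
          nth_rewrite 2 [swap]
          rw [hSKba]
          simp only [Finset.mul_sum, ← mul_assoc, ← Finset.sum_add_distrib]
          exact Finset.sum_congr rfl fun i _ => Finset.sum_congr rfl fun j _ => by
            ring
      _ = SKbb := by
          rw [hSKbb]
          simp only [Finset.mul_sum, ← mul_assoc]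
          exact Finset.sum_congr rfl fun i _ => Finset.sum_congr rfl fun j _ => by
            rw [hsym]
  have h5 : SL1 + SLba = SLbb := by
    have swap : SL1 = ∑ i, ∑ j, b j * a j i * ⟪kS i, lS j⟫ := by
      rw [hSL1]
      simp only [Finset.mul_sum, ← mul_assoc]
      rw [Finset.sum_comm]
    rw [swap, hSLba, hSLbb]
    simp only [Finset.mul_sum, ← mul_assoc, ← Finset.sum_add_distrib]
    refine Finset.sum_congr rfl fun i _ => Finset.sum_congr rfl fun j _ => ?_
    linear_combination ⟪kS i, lS j⟫ * hsym i j
  -- energy expansions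
  have E1 : ⟪un1, un1⟫ = ⟪un, un⟫ + 2 * (τ * SA) + τ^2 * SKbb := by
    rw [hun1, inner_add_left, inner_add_right, hinr, hinl]
    simp_rw [inner_add_right, hinr]
    have c1 : ∑ j, b j * ⟪un, kS j⟫ = SA := by
      rw [hSA]; exact Finset.sum_congr rfl fun j _ => by rw [real_inner_comm]
    have c2 : ∑ j, b j * (⟪kS j, un⟫ + τ * ∑ i, b i * ⟪kS j, kS i⟫)
        = SA + τ * SKbb := by
      rw [hSA, hSKbb, Finset.mul_sum, ← Finset.sum_add_distrib]
      exact Finset.sum_congr rfl fun j _ => by ring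
    rw [c1, c2]; ring
  have E2 : ⟪un1, qn1⟫ = ⟪un, qn⟫ + τ * SB + τ * SC + τ^2 * SLbb := by
    rw [hun1, hqn1, inner_add_left, inner_add_right, hinr, hinl]
    simp_rw [inner_add_right, hinr]
    have c2 : ∑ j, b j * (⟪kS j, qn⟫ + τ * ∑ i, b i * ⟪kS j, lS i⟫)
        = SC + τ * SLbb := by
      rw [hSC, hSLbb, Finset.mul_sum, ← Finset.sum_add_distrib]
      exact Finset.sum_congr rfl fun j _ => by ring
    rw [c2, ← hSB]; ring
  rw [E1, E2]
  linear_combination τ * h3 - (τ^2/2) * h4 - (τ^2/6) * h5
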